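/- Suppose every LLM is single-role, i.e., for every LLM j there is at most one role i with p_i^j > 0. For a profile Γ of meta-actions, define the aggregate mixed action of role i as M_i^{agg}(Γ) := Σ_{j∈L} p_i^j · E_{M∼Γ^j}[M_i^j]. Then: (i) for every Nash equilibrium Γ of the one-shot meta-game, the aggregate profile (M_1^{agg}(Γ),…,M_m^{agg}(Γ)) is a mixed Nash equilibrium of the base game; and (ii) for every mixed Nash equilibrium (x_1,…,x_m) of the base game, the profile of pure meta-actions defined by M_i^j := x_i for every j with p_i^j > 0 is a Nash equilibrium of the one-shot meta-game whose aggregate profile equals (x_1,…,x_m). -/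

import Mathlib

open Finset

namespace MetaGame

/-- A mixed action over a finite action set: a probability vector. -/
def Mixed (α : Type) [Fintype α] : Type :=
  {f : α → ℝ // (∀ a, 0 ≤ f a) ∧ ∑ a, f a = 1}

/-- The point-mass (Dirac) mixed action on `a`. -/
noncomputable def Mixed.dirac {α : Type} [Fintype α] [DecidableEq α] (a : α) : Mixed α :=
  ⟨fun b => if b = a then 1 else 0,
    fun b => by by_cases h : b = a <;> simp [h],
    by simp⟩

/-- A finitely supported probability distribution on `α`. -/
structure FinDist (α : Type) where
  support : Finset α
  w : α → ℝ
  nonneg : ∀ x, 0 ≤ w x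
  sum_one : ∑ x ∈ support, w x = 1
  zero_of_not_mem : ∀ x, x ∉ support → w x = 0

/-- The point mass distribution on `x`. -/
noncomputable def FinDist.pure {α : Type} (x : α) : FinDist α := by
  classical
  exact
    { support := {x}
      w := fun y => if y = x then 1 else 0
      nonneg := fun y => by by_cases h : y = x <;> simp [h]
      sum_one := by simp
      zero_of_not_mem := fun y hy => by
        simp only [Finset.mem_singleton] at hy
        simp [hy] }

variable {m k : ℕ} {A : Fin m → Type} [∀ i, Fintype (A i)] [∀ i, DecidableEq (A i)]

/-- Multilinear extension of a payoff function to profiles of mixed actions. -/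
noncomputable def expPay (u : (∀ r : Fin m, A r) → ℝ) (σ : ∀ r, Mixed (A r)) : ℝ :=
  ∑ a : ∀ r : Fin m, A r, (∏ r, (σ r).1 (a r)) * u a

/-- A pure meta-action: a mixed action for each role. -/
abbrev PureMeta (A : Fin m → Type) [∀ i, Fintype (A i)] : Type := ∀ i, Mixed (A i)

/-- The role-homogeneous pure meta-action instructing pure action `a i` in each role `i`. -/
noncomputable def diracProfile (a : ∀ i : Fin m, A i) : PureMeta A := fun i => Mixed.dirac (a i)

/-- Utility of LLM `j` under a profile of pure meta-actions. -/
noncomputable def Upure (u : ∀ i : Fin m, (∀ r : Fin m, A r) → ℝ) (p : Fin m → Fin k → ℝ)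
    (j : Fin k) (M : Fin k → PureMeta A) : ℝ :=
  ∑ i, ∑ g : Fin m → Fin k,
    if g i = j then (∏ r, p r (g r)) * expPay (u i) (fun r => M (g r) r) else 0

/-- Utility of LLM `j` under a profile of (finitely supported, independent) meta-actions. -/
noncomputable def U (u : ∀ i : Fin m, (∀ r : Fin m, A r) → ℝ) (p : Fin m → Fin k → ℝ)
    (Γ : Fin k → FinDist (PureMeta A)) (j : Fin k) : ℝ :=
  ∑ M ∈ Fintype.piFinset (fun j' => (Γ j').support),
    (∏ j', (Γ j').w (M j')) * Upure u p j M

/-- Nash equilibrium of the one-shot meta-game. -/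
def Nash (u : ∀ i : Fin m, (∀ r : Fin m, A r) → ℝ) (p : Fin m → Fin k → ℝ)
    (Γ : Fin k → FinDist (PureMeta A)) : Prop :=
  ∀ (j : Fin k) (Γ' : FinDist (PureMeta A)),
    U u p (Function.update Γ j Γ') j ≤ U u p Γ j

/-- Average utility of the clients governed by LLM `j`. -/
noncomputable def avgU (u : ∀ i : Fin m, (∀ r : Fin m, A r) → ℝ) (p : Fin m → Fin k → ℝ)
    (Γ : Fin k → FinDist (PureMeta A)) (j : Fin k) : ℝ :=
  U u p Γ j / ∑ i, p i j

/-- A meta-action is role-homogeneous if every pure meta-action in its support is a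
tuple of point-mass mixed actions. -/
def RoleHomogeneous (Γ : FinDist (PureMeta A)) : Prop :=
  ∀ M ∈ Γ.support, ∃ a : ∀ i : Fin m, A i, M = diracProfile a


/-- Mixed Nash equilibrium of the base game. -/
def BaseNash (u : ∀ i : Fin m, (∀ r : Fin m, A r) → ℝ) (x : ∀ i : Fin m, Mixed (A i)) : Prop :=
  ∀ (i : Fin m) (α : Mixed (A i)),
    expPay (u i) (Function.update x i α) ≤ expPay (u i) x


section Helpers

variable {m k : ℕ} {A : Fin m → Type} [∀ i, Fintype (A i)] [∀ i, DecidableEq (A i)]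

/-- Multilinear extension, on raw vectors. -/
noncomputable def expPayF (u : (∀ r : Fin m, A r) → ℝ) (σ : ∀ r, A r → ℝ) : ℝ :=
  ∑ a : ∀ r : Fin m, A r, (∏ r, σ r (a r)) * u a

lemma expPay_eq_expPayF (u : (∀ r : Fin m, A r) → ℝ) (σ : ∀ r, Mixed (A r)) :
    expPay u σ = expPayF u (fun r => (σ r).1) := rfl

/-- Mean mixed action of LLM `j` in role `i`. -/
noncomputable def barF (Γ : Fin k → FinDist (PureMeta A)) (j : Fin k) (i : Fin m) : A i → ℝ :=
  fun a => ∑ M ∈ (Γ j).support, (Γ j).w M * (M i).1 a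

/-- Aggregate mixed action of role `r`. -/
noncomputable def aggF (p : Fin m → Fin k → ℝ) (Γ : Fin k → FinDist (PureMeta A))
    (r : Fin m) : A r → ℝ :=
  fun a => ∑ j, p r j * barF Γ j r a

lemma prod_update_apply (σ : ∀ r : Fin m, A r → ℝ) (i : Fin m) (τ : A i → ℝ) (a : ∀ r, A r) :
    (∏ r, (Function.update σ i τ) r (a r)) = τ (a i) * ∏ r ∈ univ.erase i, σ r (a r) := by
  rw [← Finset.mul_prod_erase univ _ (mem_univ i), Function.update_self]
  congr 1
  exact Finset.prod_congr rfl fun r hr => by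
    rw [Function.update_of_ne (Finset.ne_of_mem_erase hr)]

lemma expPayF_update_sum (u : (∀ r : Fin m, A r) → ℝ) (σ : ∀ r, A r → ℝ) (i : Fin m)
    (s : Finset (Fin k)) (c : Fin k → ℝ) (f : Fin k → A i → ℝ) :
    expPayF u (Function.update σ i (fun a => ∑ j ∈ s, c j * f j a)) =
      ∑ j ∈ s, c j * expPayF u (Function.update σ i (f j)) := by
  unfold expPayF
  simp only [prod_update_apply, Finset.sum_mul, Finset.mul_sum]
  rw [Finset.sum_comm]
  exact Finset.sum_congr rfl fun j _ => Finset.sum_congr rfl fun a _ => by ring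

lemma exists_le_convex (c v : Fin k → ℝ) (hc : ∀ j, 0 ≤ c j) (h1 : ∑ j, c j = 1) :
    ∃ j, 0 < c j ∧ v j ≤ ∑ j', c j' * v j' := by
  by_contra h
  push_neg at h
  have hlt : ∑ j', c j' * (∑ j'', c j'' * v j'') < ∑ j', c j' * v j' := by
    have hex : ∃ j0, 0 < c j0 := by
      by_contra hx
      push_neg at hx
      have : ∑ j, c j = 0 := Finset.sum_eq_zero fun j _ => le_antisymm (hx j) (hc j)
      simp [this] at h1
    obtain ⟨j0, hj0⟩ := hex
    refine Finset.sum_lt_sum (fun j _ => ?_) ⟨j0, Finset.mem_univ j0, ?_⟩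
    · rcases eq_or_lt_of_le (hc j) with hcz | hcp
      · simp [← hcz]
      · exact le_of_lt (mul_lt_mul_of_pos_left (h j hcp) hcp)
    · exact mul_lt_mul_of_pos_left (h j0 hj0) hj0
  rw [← Finset.sum_mul, h1, one_mul] at hlt
  exact lt_irrefl _ hlt

/-- Factorization of the expectation over independent meta-actions along an injective
assignment `g` of LLMs to roles. -/
lemma factor_expectation (Γ : Fin k → FinDist (PureMeta A)) (g : Fin m → Fin k)
    (hg : Function.Injective g) (u : (∀ r : Fin m, A r) → ℝ) :
    ∑ M ∈ Fintype.piFinset (fun j' => (Γ j').support),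
      (∏ j', (Γ j').w (M j')) * expPayF u (fun r => ((M (g r)) r).1)
    = expPayF u (fun r => barF Γ (g r) r) := by
  classical
  unfold expPayF
  simp only [Finset.mul_sum]
  rw [Finset.sum_comm]
  refine Finset.sum_congr rfl fun a _ => ?_
  simp only [← mul_assoc, ← Finset.sum_mul]
  congr 1
  -- goal: ∑ M, (∏ j', w (M j')) * ∏ r, (M (g r) r).1 (a r) = ∏ r, barF Γ (g r) r (a r)
  have hfib : ∀ (h : ∀ r : Fin m, ℝ),
      (∏ r, h r) = ∏ j' : Fin k, ∏ r ∈ univ.filter (fun r => g r = j'), h r := by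
    intro h
    rw [Finset.prod_fiberwise_of_maps_to (fun r _ => Finset.mem_univ (g r))]
  calc
    ∑ M ∈ Fintype.piFinset (fun j' => (Γ j').support),
        (∏ j', (Γ j').w (M j')) * ∏ r, ((M (g r)) r).1 (a r)
      = ∑ M ∈ Fintype.piFinset (fun j' => (Γ j').support),
        ∏ j', ((Γ j').w (M j') * ∏ r ∈ univ.filter (fun r => g r = j'), ((M j') r).1 (a r)) := by
        refine Finset.sum_congr rfl fun M _ => ?_
        rw [Finset.prod_mul_distrib]
        congr 1
        rw [hfib (fun r => ((M (g r)) r).1 (a r))]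
        refine Finset.prod_congr rfl fun j' _ => Finset.prod_congr rfl fun r hr => ?_
        simp only [Finset.mem_filter] at hr
        rw [hr.2]
    _ = ∏ j', ∑ x ∈ (Γ j').support,
          ((Γ j').w x * ∏ r ∈ univ.filter (fun r => g r = j'), (x r).1 (a r)) := by
        rw [Finset.prod_univ_sum]
    _ = ∏ j', ∏ r ∈ univ.filter (fun r => g r = j'), barF Γ j' r (a r) := by
        refine Finset.prod_congr rfl fun j' _ => ?_
        rcases Finset.eq_empty_or_nonempty (univ.filter (fun r => g r = j')) with he | ⟨r0, hr0⟩
        · rw [he]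
          simp [(Γ j').sum_one]
        · have hs : univ.filter (fun r => g r = j') = {r0} := by
            refine Finset.eq_singleton_iff_unique_mem.mpr ⟨hr0, fun r hr => ?_⟩
            simp only [Finset.mem_filter] at hr hr0
            exact hg (hr.2.trans hr0.2.symm)
          rw [hs]
          simp only [Finset.prod_singleton]
          rfl
    _ = ∏ r, barF Γ (g r) r (a r) := by
        rw [hfib (fun r => barF Γ (g r) r (a r))]
        refine Finset.prod_congr rfl fun j' _ => Finset.prod_congr rfl fun r hr => ?_
        simp only [Finset.mem_filter] at hr
        rw [hr.2]

lemma sum_pi_if (c : Fin m → Fin k → ℝ) (i : Fin m) (j : Fin k) :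
    ∑ g : Fin m → Fin k, (if g i = j then ∏ r, c r (g r) else 0)
    = c i j * ∏ r ∈ univ.erase i, ∑ j', c r j' := by
  classical
  set F : Fin m → Fin k → ℝ :=
    fun r j' => if r = i then (if j' = j then c r j' else 0) else c r j' with hF
  have hstep : ∀ g : Fin m → Fin k,
      (if g i = j then ∏ r, c r (g r) else 0) = ∏ r, F r (g r) := by
    intro g
    by_cases hgi : g i = j
    · simp only [hgi, if_true]
      refine Finset.prod_congr rfl fun r _ => ?_
      by_cases hri : r = i
      · subst hri; simp [hF, hgi]
      · simp [hF, hri]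
    · rw [if_neg hgi]
      symm
      refine Finset.prod_eq_zero (Finset.mem_univ i) ?_
      simp [hF, hgi]
  simp only [hstep]
  have h2 : ∑ g : Fin m → Fin k, ∏ r, F r (g r) = ∏ r, ∑ j', F r j' := by
    rw [← Fintype.piFinset_univ, ← Finset.prod_univ_sum]
  rw [h2, ← Finset.mul_prod_erase univ _ (mem_univ i)]
  congr 1
  · simp [hF]
  · refine Finset.prod_congr rfl fun r hr => Finset.sum_congr rfl fun j' _ => ?_
    have hri : r ≠ i := Finset.ne_of_mem_erase hr
    simp [hF, hri]

/-- The key structural formula for the meta-game utility under the single-role assumption. -/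
lemma U_formula (u : ∀ i : Fin m, (∀ r : Fin m, A r) → ℝ) (p : Fin m → Fin k → ℝ)
    (hp0 : ∀ i j, 0 ≤ p i j)
    (hsingle : ∀ (j : Fin k) (i i' : Fin m), 0 < p i j → 0 < p i' j → i = i')
    (Γ : Fin k → FinDist (PureMeta A)) (j : Fin k) :
    U u p Γ j = ∑ i, p i j * expPayF (u i) (Function.update (aggF p Γ) i (barF Γ j i)) := by
  classical
  unfold U Upure
  simp only [Finset.mul_sum]
  rw [Finset.sum_comm]
  refine Finset.sum_congr rfl fun i _ => ?_
  rw [Finset.sum_comm]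
  have key : ∀ g : Fin m → Fin k,
      (∑ M ∈ Fintype.piFinset fun j' => (Γ j').support,
        (∏ j', (Γ j').w (M j')) *
          (if g i = j then (∏ r, p r (g r)) * expPay (u i) (fun r => M (g r) r) else 0))
      = (if g i = j then (∏ r, p r (g r)) * expPayF (u i) (fun r => barF Γ (g r) r) else 0) := by
    intro g
    by_cases hgi : g i = j
    · simp only [hgi, if_true]
      by_cases hz : ∀ r, 0 < p r (g r)
      · have hginj : Function.Injective g := by
          intro r r' h
          refine hsingle (g r) r r' (hz r) ?_
          rw [h]; exact hz r'
        rw [← factor_expectation Γ g hginj (u i), Finset.mul_sum]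
        refine Finset.sum_congr rfl fun M _ => ?_
        rw [expPay_eq_expPayF]
        ring
      · push_neg at hz
        obtain ⟨r0, hr0⟩ := hz
        have hz0 : (∏ r, p r (g r)) = 0 :=
          Finset.prod_eq_zero (Finset.mem_univ r0) (le_antisymm hr0 (hp0 _ _))
        simp [hz0]
    · simp [hgi]
  simp only [key]
  have hG : ∀ g : Fin m → Fin k,
      (if g i = j then (∏ r, p r (g r)) * expPayF (u i) (fun r => barF Γ (g r) r) else 0)
      = ∑ a : ∀ r, A r,
          (if g i = j then ∏ r, (p r (g r) * barF Γ (g r) r (a r)) else 0) * u i a := by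
    intro g
    by_cases hgi : g i = j
    · simp only [hgi, if_true]
      unfold expPayF
      rw [Finset.mul_sum]
      refine Finset.sum_congr rfl fun a _ => ?_
      rw [Finset.prod_mul_distrib]
      ring
    · simp [hgi]
  simp only [hG]
  rw [Finset.sum_comm]
  unfold expPayF
  simp only [prod_update_apply]
  rw [Finset.mul_sum]
  refine Finset.sum_congr rfl fun a _ => ?_
  rw [← Finset.sum_mul, sum_pi_if (fun r j' => p r j' * barF Γ j' r (a r)) i j]
  simp only [aggF]
  ring

lemma update_val (x : ∀ i : Fin m, Mixed (A i)) (i : Fin m) (α : Mixed (A i)) :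
    (fun r => ((Function.update x i α) r).1) = Function.update (fun r => (x r).1) i α.1 := by
  funext r
  by_cases h : r = i
  · subst h; simp
  · simp [Function.update_of_ne h]

lemma barF_nonneg (Γ : Fin k → FinDist (PureMeta A)) (j : Fin k) (i : Fin m) (a : A i) :
    0 ≤ barF Γ j i a :=
  Finset.sum_nonneg fun M _ => mul_nonneg ((Γ j).nonneg M) ((M i).2.1 a)

lemma barF_sum_one (Γ : Fin k → FinDist (PureMeta A)) (j : Fin k) (i : Fin m) :
    ∑ a, barF Γ j i a = 1 := by
  unfold barF
  rw [Finset.sum_comm]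
  have h : ∀ M ∈ (Γ j).support, ∑ a, (Γ j).w M * (M i).1 a = (Γ j).w M := fun M _ => by
    rw [← Finset.mul_sum, (M i).2.2, mul_one]
  rw [Finset.sum_congr rfl h, (Γ j).sum_one]

end Helpers

/-- When every LLM is single-role: (i) the aggregate outcome of every Nash equilibrium of the
one-shot meta-game is a mixed Nash equilibrium of the base game, and (ii) every mixed Nash
equilibrium `x` of the base game arises as the aggregate outcome of the meta-game Nash equilibrium
in which each LLM plays the pure meta-action `x`. -/
theorem single_role_aggregate_equilibria
    {m k : ℕ} {A : Fin m → Type} [∀ i, Fintype (A i)] [∀ i, DecidableEq (A i)]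
    (u : ∀ i : Fin m, (∀ r : Fin m, A r) → ℝ) (p : Fin m → Fin k → ℝ)
    (hp0 : ∀ i j, 0 ≤ p i j) (hp1 : ∀ i, ∑ j, p i j = 1)
    (hsingle : ∀ (j : Fin k) (i i' : Fin m), 0 < p i j → 0 < p i' j → i = i') :
    (∀ Γ : Fin k → FinDist (PureMeta A), Nash u p Γ →
      ∀ Magg : ∀ i : Fin m, Mixed (A i),
        (∀ (i : Fin m) (a : A i),
          (Magg i).1 a = ∑ j, p i j * ∑ M ∈ (Γ j).support, (Γ j).w M * (M i).1 a) →
        BaseNash u Magg) ∧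
    (∀ x : ∀ i : Fin m, Mixed (A i), BaseNash u x →
      Nash u p (fun _ => FinDist.pure x) ∧
      ∀ (i : Fin m) (a : A i), ∑ j, p i j * (x i).1 a = (x i).1 a) := by
  classical
  constructor
  · -- (i) aggregate of a meta-game Nash equilibrium is a base-game Nash equilibrium
    intro Γ hNash Magg hM
    have hMagg : (fun r => (Magg r).1) = aggF p Γ := by
      funext r a
      exact hM r a
    intro i α
    rw [expPay_eq_expPayF, expPay_eq_expPayF, update_val, hMagg]
    have hdecomp : expPayF (u i) (aggF p Γ) =
        ∑ j, p i j * expPayF (u i) (Function.update (aggF p Γ) i (barF Γ j i)) := by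
      have h0 : aggF p Γ =
          Function.update (aggF p Γ) i (fun a => ∑ j, p i j * barF Γ j i a) := by
        rw [show (fun a => ∑ j, p i j * barF Γ j i a) = aggF p Γ i from rfl,
          Function.update_eq_self]
      conv_lhs => rw [h0]
      exact expPayF_update_sum (u i) (aggF p Γ) i univ (p i) (fun j => barF Γ j i)
    obtain ⟨j, hpj, hle⟩ := exists_le_convex (p i)
      (fun j => expPayF (u i) (Function.update (aggF p Γ) i (barF Γ j i))) (hp0 i) (hp1 i)
    rw [← hdecomp] at hle
    set Γ' : FinDist (PureMeta A) := FinDist.pure (Function.update Magg i α) with hΓ'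
    have hdev := hNash j Γ'
    rw [U_formula u p hp0 hsingle Γ j,
      U_formula u p hp0 hsingle (Function.update Γ j Γ') j] at hdev
    have hpr0 : ∀ r : Fin m, r ≠ i → p r j = 0 := by
      intro r hr
      by_contra hpr
      exact hr (hsingle j r i (lt_of_le_of_ne (hp0 r j) (Ne.symm hpr)) hpj)
    have hU : (∑ i', p i' j * expPayF (u i') (Function.update (aggF p Γ) i' (barF Γ j i')))
        = p i j * expPayF (u i) (Function.update (aggF p Γ) i (barF Γ j i)) :=
      Finset.sum_eq_single i (fun i' _ hi' => by rw [hpr0 i' hi', zero_mul])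
        (fun h => absurd (Finset.mem_univ i) h)
    have hbar' : ∀ r : Fin m,
        barF (Function.update Γ j Γ') j r = ((Function.update Magg i α) r).1 := by
      intro r; funext a
      simp [barF, hΓ', FinDist.pure]
    have hbarold : ∀ j' : Fin k, j' ≠ j →
        barF (Function.update Γ j Γ') j' = barF Γ j' := by
      intro j' hj'; funext r a
      simp [barF, Function.update_of_ne hj']
    have hagg' : ∀ r : Fin m, r ≠ i →
        aggF p (Function.update Γ j Γ') r = aggF p Γ r := by
      intro r hr; funext a
      unfold aggF
      refine Finset.sum_congr rfl fun j' _ => ?_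
      by_cases hj' : j' = j
      · subst hj'; rw [hpr0 r hr, zero_mul, zero_mul]
      · rw [hbarold j' hj']
    have hupd : Function.update (aggF p (Function.update Γ j Γ')) i
        (barF (Function.update Γ j Γ') j i) = Function.update (aggF p Γ) i α.1 := by
      funext r
      by_cases hri : r = i
      · subst hri
        rw [Function.update_self, Function.update_self, hbar' r]
        simp
      · rw [Function.update_of_ne hri, Function.update_of_ne hri, hagg' r hri]
    have hUdev : (∑ i', p i' j * expPayF (u i')
          (Function.update (aggF p (Function.update Γ j Γ')) i'
            (barF (Function.update Γ j Γ') j i')))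
        = p i j * expPayF (u i) (Function.update (aggF p Γ) i α.1) := by
      rw [Finset.sum_eq_single i (fun i' _ hi' => by rw [hpr0 i' hi', zero_mul])
        (fun h => absurd (Finset.mem_univ i) h), hupd]
    rw [hU, hUdev] at hdev
    exact ((mul_le_mul_iff_right₀ hpj).mp hdev).trans hle
  · -- (ii) base-game Nash equilibria give meta-game Nash equilibria
    intro x hBase
    constructor
    · intro j Γ'
      set Γ : Fin k → FinDist (PureMeta A) := fun _ => FinDist.pure x with hΓ
      rw [U_formula u p hp0 hsingle, U_formula u p hp0 hsingle]
      have hbarx : ∀ (j' : Fin k) (r : Fin m), barF Γ j' r = (x r).1 := by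
        intro j' r; funext a
        simp [barF, hΓ, FinDist.pure]
      have haggx : aggF p Γ = fun r => (x r).1 := by
        funext r a
        simp only [aggF, hbarx]
        rw [← Finset.sum_mul, hp1, one_mul]
      refine Finset.sum_le_sum fun i _ => ?_
      rcases eq_or_lt_of_le (hp0 i j) with hz | hpos
      · rw [← hz, zero_mul, zero_mul]
      refine mul_le_mul_of_nonneg_left ?_ (le_of_lt hpos)
      have hpr0 : ∀ r : Fin m, r ≠ i → p r j = 0 := by
        intro r hr
        by_contra hpr
        exact hr (hsingle j r i (lt_of_le_of_ne (hp0 r j) (Ne.symm hpr)) hpos)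
      set Γ₂ := Function.update Γ j Γ' with hΓ₂
      have hbarold : ∀ j' : Fin k, j' ≠ j → barF Γ₂ j' = barF Γ j' := by
        intro j' hj'; funext r a
        simp [barF, hΓ₂, Function.update_of_ne hj']
      have hagg2 : ∀ r : Fin m, r ≠ i → aggF p Γ₂ r = (x r).1 := by
        intro r hr; funext a
        have : aggF p Γ₂ r a = aggF p Γ r a := by
          unfold aggF
          refine Finset.sum_congr rfl fun j' _ => ?_
          by_cases hj' : j' = j
          · subst hj'; rw [hpr0 r hr, zero_mul, zero_mul]
          · rw [hbarold j' hj']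
        rw [this, haggx]
      set α : Mixed (A i) := ⟨barF Γ₂ j i, barF_nonneg Γ₂ j i, barF_sum_one Γ₂ j i⟩ with hα
      have hleft : Function.update (aggF p Γ₂) i (barF Γ₂ j i)
          = Function.update (fun r => (x r).1) i α.1 := by
        funext r
        by_cases hri : r = i
        · subst hri; rw [Function.update_self, Function.update_self]
        · rw [Function.update_of_ne hri, Function.update_of_ne hri, hagg2 r hri]
      have hright : Function.update (aggF p Γ) i (barF Γ j i) = fun r => (x r).1 := by
        rw [haggx, hbarx j i]
        exact Function.update_eq_self i _
      rw [hleft, hright]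
      have := hBase i α
      rw [expPay_eq_expPayF, expPay_eq_expPayF, update_val] at this
      exact this
    · intro i a
      rw [← Finset.sum_mul, hp1, one_mul]


end MetaGame
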